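/- arXiv:1310.6550 — 5 statements merged into one kernel-verified Lean document; each statement's English description precedes it below -/
import Mathlib

section
/- For every ε ∈ (0,1), the expected first passage time of the non-adaptive Metropolis chain from state 1 to state 3 satisfies E[T̄₁→₃] = 6/ε + 3; equivalently, (ε/6)·E[T̄₁→₃] = 1 + ε/2, which tends to 1 as ε → 0. -/
open MeasureTheory ProbabilityTheory Filter Real Set Topology

noncomputable section

/-- The state space: index `0` is state "1", index `1` is state "2", index `2` is state "3". -/
abbrev WLState := Fin 3

/-- First passage time of the trajectory `ω` to the state `s`
(with the convention `sInf ∅ = 0`). -/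
def hitTime (s : WLState) (ω : ℕ → WLState) : ℕ := sInf {n : ℕ | ω n = s}

/-- A measure `μ` on trajectory space is the law of the (possibly path-dependent) Markov chain
with initial state `x0` and transition matrix `P x k` at time `k` given the past path `x`,
expressed through its cylinder probabilities. -/
def IsChainLaw (P : (ℕ → WLState) → ℕ → WLState → WLState → ℝ) (x0 : WLState)
    (μ : Measure (ℕ → WLState)) : Prop :=
  ∀ (n : ℕ) (x : ℕ → WLState),
    μ {ω : ℕ → WLState | ∀ k ≤ n, ω k = x k} =
      (if x 0 = x0 then (1 : ENNReal) else 0) *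
        ∏ k ∈ Finset.range n, ENNReal.ofReal (P x k (x k) (x (k + 1)))

/-- Transition matrix of the non-adaptive Metropolis chain: rows
`(1-ε/3, ε/3, 0)`, `(1/3, 1/3, 1/3)`, `(0, ε/3, 1-ε/3)`. -/
def Pbar (ε : ℝ) : WLState → WLState → ℝ :=
  ![![1 - ε / 3, ε / 3, 0], ![1 / 3, 1 / 3, 1 / 3], ![0, ε / 3, 1 - ε / 3]]

def P' (ε : ℝ) (i j : WLState) : ENNReal := ENNReal.ofReal (Pbar ε i j)

/-- extend a finite path to an infinite one -/
def ext (n : ℕ) (v : Fin (n+1) → WLState) : ℕ → WLState :=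
  fun k => if h : k < n + 1 then v ⟨k, h⟩ else 0

lemma ext_eq (n : ℕ) (v : Fin (n+1) → WLState) (k : ℕ) (h : k < n+1) :
    ext n v k = v ⟨k, h⟩ := dif_pos h

/-- weight of a finite path -/
def w (ε : ℝ) (n : ℕ) (v : Fin (n+1) → WLState) : ENNReal :=
  (if v 0 = 0 then 1 else 0) * ∏ k : Fin n, P' ε (v k.castSucc) (v k.succ)

def g (ε : ℝ) (n : ℕ) (i : WLState) : ENNReal :=
  ∑ v ∈ Finset.univ.filter
      (fun v : Fin (n+1) → WLState => (∀ k, v k ≠ 2) ∧ v (Fin.last n) = i), w ε n v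

lemma w_snoc (ε : ℝ) (n : ℕ) (v : Fin (n+1) → WLState) (x : WLState) :
    w ε (n+1) (Fin.snoc v x) = w ε n v * P' ε (v (Fin.last n)) x := by
  unfold w
  have h0 : (Fin.snoc v x : Fin (n+2) → WLState) 0 = v 0 := by
    rw [show (0 : Fin (n+2)) = Fin.castSucc 0 by rfl, Fin.snoc_castSucc]
  rw [h0, Fin.prod_univ_castSucc
    (f := fun k : Fin (n+1) => P' ε ((Fin.snoc v x : Fin (n+2) → WLState) k.castSucc)
      ((Fin.snoc v x : Fin (n+2) → WLState) k.succ))]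
  have hlast : P' ε ((Fin.snoc v x : Fin (n+2) → WLState) (Fin.last n).castSucc)
      ((Fin.snoc v x : Fin (n+2) → WLState) (Fin.last n).succ) = P' ε (v (Fin.last n)) x := by
    rw [Fin.snoc_castSucc, Fin.succ_last, Fin.snoc_last]
  have hmid : ∀ k : Fin n,
      P' ε ((Fin.snoc v x : Fin (n+2) → WLState) k.castSucc.castSucc)
        ((Fin.snoc v x : Fin (n+2) → WLState) k.castSucc.succ)
      = P' ε (v k.castSucc) (v k.succ) := by
    intro k
    rw [Fin.snoc_castSucc, Fin.succ_castSucc, Fin.snoc_castSucc]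
  rw [Finset.prod_congr rfl (fun k _ => hmid k), hlast, mul_assoc]

lemma g_two (ε : ℝ) (n : ℕ) : g ε n 2 = 0 := by
  unfold g
  rw [Finset.filter_false_of_mem, Finset.sum_empty]
  rintro v - ⟨h1, h2⟩
  exact h1 _ h2

lemma g_succ (ε : ℝ) (n : ℕ) (j : WLState) (hj : j ≠ 2) :
    g ε (n+1) j = g ε n 0 * P' ε 0 j + g ε n 1 * P' ε 1 j := by
  have key : g ε (n+1) j =
      ∑ v ∈ Finset.univ.filter (fun v : Fin (n+1) → WLState => ∀ k, v k ≠ 2),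
        w ε n v * P' ε (v (Fin.last n)) j := by
    unfold g
    refine (Finset.sum_nbij' (i := fun v' => Fin.init v') (j := fun v => Fin.snoc v j)
      ?_ ?_ ?_ ?_ ?_).symm.symm
    · rintro v' hv'
      simp only [Finset.mem_filter, Finset.mem_univ, true_and] at hv' ⊢
      intro k
      exact hv'.1 k.castSucc
    · rintro v hv
      simp only [Finset.mem_filter, Finset.mem_univ, true_and] at hv ⊢
      constructor
      · intro k
        refine Fin.lastCases ?_ ?_ k
        · rw [Fin.snoc_last]; exact hj
        · intro i; rw [Fin.snoc_castSucc]; exact hv i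
      · exact Fin.snoc_last _ _
    · rintro v' hv'
      simp only [Finset.mem_filter, Finset.mem_univ, true_and] at hv'
      rw [← hv'.2]
      exact Fin.snoc_init_self v'
    · rintro v hv
      simp
    · rintro v' hv'
      simp only [Finset.mem_filter, Finset.mem_univ, true_and] at hv'
      have hsn : Fin.snoc (Fin.init v') j = v' := by
        rw [← hv'.2]; exact Fin.snoc_init_self v'
      rw [← hsn, w_snoc]
      simp [Fin.init_snoc]
  rw [key]
  rw [← Finset.sum_fiberwise_of_maps_to (g := fun v : Fin (n+1) → WLState => v (Fin.last n))
    (fun v _ => Finset.mem_univ _)]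
  have : ∀ i : WLState,
      (∑ v ∈ (Finset.univ.filter (fun v : Fin (n+1) → WLState => ∀ k, v k ≠ 2)).filter
        (fun v => v (Fin.last n) = i), w ε n v * P' ε (v (Fin.last n)) j)
      = g ε n i * P' ε i j := by
    intro i
    rw [Finset.filter_filter, g, Finset.sum_mul]
    refine Finset.sum_congr (by simp [and_comm]) ?_
    · intro v hv
      simp only [Finset.mem_filter] at hv
      rw [hv.2.2]
  rw [Fin.sum_univ_three, this 0, this 1, this 2, g_two, zero_mul, add_zero]


lemma g_zero (ε : ℝ) (i : WLState) :
    g ε 0 i = if i = 0 then 1 else 0 := by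
  unfold g
  rw [Finset.sum_filter]
  rw [← Fintype.sum_equiv (Equiv.funUnique (Fin 1) WLState).symm
      (fun s : WLState => if (∀ k : Fin 1, (s : WLState) ≠ 2) ∧ s = i then w ε 0 (fun _ => s) else 0)
      _ (fun s => rfl)]
  rw [Fin.sum_univ_three]
  have hw : ∀ s : WLState, w ε 0 (fun _ => s) = if s = 0 then 1 else 0 := by
    intro s; simp [w]
  fin_cases i <;> simp [hw]

/-- the real-valued pair (a n, b n) -/
def ab (ε : ℝ) : ℕ → ℝ × ℝ
  | 0 => (1, 0)
  | n+1 => ((1 - ε/3) * (ab ε n).1 + (1/3) * (ab ε n).2,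
            (ε/3) * (ab ε n).1 + (1/3) * (ab ε n).2)

lemma ab_nonneg {ε : ℝ} (hε : ε ∈ Set.Ioo (0:ℝ) 1) (n : ℕ) :
    0 ≤ (ab ε n).1 ∧ 0 ≤ (ab ε n).2 := by
  obtain ⟨h0, h1⟩ := hε
  induction n with
  | zero => norm_num [ab]
  | succ n ih =>
    obtain ⟨ha, hb⟩ := ih
    constructor <;> · simp only [ab]; nlinarith

lemma Pbar00 (ε : ℝ) : Pbar ε 0 0 = 1 - ε/3 := rfl
lemma Pbar01 (ε : ℝ) : Pbar ε 0 1 = ε/3 := rfl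
lemma Pbar10 (ε : ℝ) : Pbar ε 1 0 = 1/3 := rfl
lemma Pbar11 (ε : ℝ) : Pbar ε 1 1 = 1/3 := rfl

lemma g_eq_ab {ε : ℝ} (hε : ε ∈ Set.Ioo (0:ℝ) 1) (n : ℕ) :
    g ε n 0 = ENNReal.ofReal (ab ε n).1 ∧ g ε n 1 = ENNReal.ofReal (ab ε n).2 := by
  obtain ⟨h0, h1⟩ := hε
  induction n with
  | zero => simp [g_zero, ab]
  | succ n ih =>
    obtain ⟨ha, hb⟩ := ih
    have hna := (ab_nonneg ⟨h0, h1⟩ n).1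
    have hnb := (ab_nonneg ⟨h0, h1⟩ n).2
    constructor
    · rw [g_succ ε n 0 (by decide), ha, hb]
      simp only [ab, P', Pbar00, Pbar10]
      rw [← ENNReal.ofReal_mul hna, ← ENNReal.ofReal_mul hnb,
        ← ENNReal.ofReal_add (by nlinarith) (by nlinarith)]
      ring_nf
    · rw [g_succ ε n 1 (by decide), ha, hb]
      simp only [ab, P', Pbar01, Pbar11]
      rw [← ENNReal.ofReal_mul hna, ← ENNReal.ofReal_mul hnb,
        ← ENNReal.ofReal_add (by nlinarith) (by nlinarith)]
      ring_nf


def cylSet (n : ℕ) (v : Fin (n+1) → WLState) : Set (ℕ → WLState) :=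
  {ω | ∀ k ≤ n, ω k = ext n v k}

lemma cylSet_measurable (n : ℕ) (v : Fin (n+1) → WLState) : MeasurableSet (cylSet n v) := by
  have : cylSet n v = ⋂ k ∈ {k : ℕ | k ≤ n}, (fun ω : ℕ → WLState => ω k) ⁻¹' {ext n v k} := by
    ext ω; simp [cylSet]
  rw [this]
  exact MeasurableSet.biInter (Set.to_countable _)
    (fun k _ => (measurable_pi_apply k) (measurableSet_singleton _))

lemma cylSet_meas {ε : ℝ} {μ : Measure (ℕ → WLState)}
    (hμ : IsChainLaw (fun _ _ => Pbar ε) 0 μ) (n : ℕ) (v : Fin (n+1) → WLState) :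
    μ (cylSet n v) = w ε n v := by
  have h := hμ n (ext n v)
  have h0 : ext n v 0 = v 0 := by
    rw [ext_eq n v 0 (Nat.succ_pos n)]; congr 1
  rw [cylSet, h, h0, w]
  congr 1
  rw [← Fin.prod_univ_eq_prod_range
    (fun k : ℕ => ENNReal.ofReal (Pbar ε (ext n v k) (ext n v (k + 1)))) n]
  refine Finset.prod_congr rfl (fun k _ => ?_)
  have h1 : ext n v (k : ℕ) = v k.castSucc := by
    rw [ext_eq n v k (by omega)]; congr 1
  have h2 : ext n v ((k : ℕ) + 1) = v k.succ := by
    rw [ext_eq n v (k + 1) (by omega)]; congr 1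
  rw [P', h1, h2]

lemma meas_prefix (μ : Measure (ℕ → WLState)) (n : ℕ)
    (Φ : (Fin (n+1) → WLState) → Prop) [DecidablePred Φ] :
    μ {ω | Φ (fun k : Fin (n+1) => ω k)} = ∑ v ∈ Finset.univ.filter Φ, μ (cylSet n v) := by
  have hset : {ω : ℕ → WLState | Φ (fun k : Fin (n+1) => ω k)}
      = ⋃ v ∈ Finset.univ.filter Φ, cylSet n v := by
    ext ω
    simp only [Set.mem_setOf_eq, Set.mem_iUnion, Finset.mem_filter, Finset.mem_univ, true_and]
    constructor
    · intro h
      refine ⟨fun k => ω k, h, fun k hk => ?_⟩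
      rw [ext_eq n _ k (by omega)]
    · rintro ⟨v, hv, hω⟩
      have : (fun k : Fin (n+1) => ω k) = v := by
        funext k
        rw [hω k (by omega), ext_eq n v k k.isLt]
      rwa [this]
  rw [hset]
  refine measure_biUnion_finset ?_ (fun v _ => cylSet_measurable n v)
  intro v _ v' _ hne
  rw [Function.onFun, Set.disjoint_left]
  intro ω hω hω'
  refine hne (funext fun k => ?_)
  have e1 := hω k (by omega)
  have e2 := hω' k (by omega)
  rw [ext_eq n v k k.isLt] at e1
  rw [ext_eq n v' k k.isLt] at e2
  rw [← Fin.eta k k.isLt, ← e1, e2]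

lemma measA {ε : ℝ} {μ : Measure (ℕ → WLState)}
    (hμ : IsChainLaw (fun _ _ => Pbar ε) 0 μ) (n : ℕ) :
    μ {ω : ℕ → WLState | ∀ k ≤ n, ω k ≠ 2} = g ε n 0 + g ε n 1 := by
  have hset : {ω : ℕ → WLState | ∀ k ≤ n, ω k ≠ 2}
      = {ω : ℕ → WLState | ∀ k : Fin (n+1), ω ↑k ≠ 2} := by
    ext ω
    simp only [Set.mem_setOf_eq]
    constructor
    · intro h k; exact h k (by omega)
    · intro h k hk; exact h ⟨k, by omega⟩
  have hmp : μ {ω : ℕ → WLState | ∀ k : Fin (n+1), ω ↑k ≠ 2}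
      = ∑ v ∈ Finset.univ.filter (fun v : Fin (n+1) → WLState => ∀ k, v k ≠ 2),
          μ (cylSet n v) :=
    meas_prefix μ n (fun v : Fin (n+1) → WLState => ∀ k, v k ≠ 2)
  rw [hset, hmp]
  rw [Finset.sum_congr rfl (fun v _ => cylSet_meas hμ n v)]
  rw [← Finset.sum_fiberwise_of_maps_to (g := fun v : Fin (n+1) → WLState => v (Fin.last n))
    (fun v _ => Finset.mem_univ _)]
  have key : ∀ i : WLState,
      (∑ v ∈ (Finset.univ.filter (fun v : Fin (n+1) → WLState => ∀ k, v k ≠ 2)).filter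
        (fun v => v (Fin.last n) = i), w ε n v) = g ε n i := by
    intro i
    rw [Finset.filter_filter, g]
  rw [Fin.sum_univ_three, key 0, key 1, key 2, g_two, add_zero]


lemma ab_telescope {ε : ℝ} (hε : ε ∈ Set.Ioo (0:ℝ) 1) (N : ℕ) :
    ∑ n ∈ Finset.range N, ((ab ε n).1 + (ab ε n).2)
      + ((6/ε + 3) * (ab ε N).1 + (3/ε + 3) * (ab ε N).2) = 6/ε + 3 := by
  obtain ⟨h0, h1⟩ := hε
  have hne : ε ≠ 0 := ne_of_gt h0
  induction N with
  | zero => simp [ab]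
  | succ N ih =>
    rw [Finset.sum_range_succ]
    have step : (ab ε N).1 + (ab ε N).2
        + ((6/ε + 3) * (ab ε (N+1)).1 + (3/ε + 3) * (ab ε (N+1)).2)
        = (6/ε + 3) * (ab ε N).1 + (3/ε + 3) * (ab ε N).2 := by
      simp only [ab]
      field_simp
      ring
    linarith [ih]

lemma ab_decay {ε : ℝ} (hε : ε ∈ Set.Ioo (0:ℝ) 1) (n : ℕ) :
    (ab ε n).1 + (3/4) * (ab ε n).2 ≤ (1 - ε/12)^n := by
  obtain ⟨h0, h1⟩ := hε
  induction n with
  | zero => norm_num [ab]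
  | succ n ih =>
    have ha := (ab_nonneg ⟨h0, h1⟩ n).1
    have hb := (ab_nonneg ⟨h0, h1⟩ n).2
    have key : (ab ε (n+1)).1 + (3/4) * (ab ε (n+1)).2
        ≤ (1 - ε/12) * ((ab ε n).1 + (3/4) * (ab ε n).2) := by
      simp only [ab]; nlinarith
    calc (ab ε (n+1)).1 + (3/4) * (ab ε (n+1)).2
        ≤ (1 - ε/12) * ((ab ε n).1 + (3/4) * (ab ε n).2) := key
      _ ≤ (1 - ε/12) * (1 - ε/12)^n := by
          apply mul_le_mul_of_nonneg_left ih (by linarith)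
      _ = (1 - ε/12)^(n+1) := (pow_succ' _ _).symm

lemma ab_tendsto {ε : ℝ} (hε : ε ∈ Set.Ioo (0:ℝ) 1) :
    Tendsto (fun n => (ab ε n).1 + (ab ε n).2) atTop (nhds 0) := by
  obtain ⟨h0, h1⟩ := hε
  have hgeo : Tendsto (fun n : ℕ => (1 - ε/12)^n) atTop (nhds 0) :=
    tendsto_pow_atTop_nhds_zero_of_lt_one (by linarith) (by linarith)
  have hgeo' : Tendsto (fun n : ℕ => (4/3) * (1 - ε/12)^n) atTop (nhds 0) := by
    simpa using hgeo.const_mul (4/3 : ℝ)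
  refine squeeze_zero (fun n => ?_) (fun n => ?_) hgeo'
  · have := ab_nonneg ⟨h0, h1⟩ n; linarith [this.1, this.2]
  · have hd := ab_decay ⟨h0, h1⟩ n
    have ha := (ab_nonneg ⟨h0, h1⟩ n).1
    nlinarith

lemma ab_hasSum {ε : ℝ} (hε : ε ∈ Set.Ioo (0:ℝ) 1) :
    HasSum (fun n => (ab ε n).1 + (ab ε n).2) (6/ε + 3) := by
  obtain ⟨h0, h1⟩ := hε
  refine (hasSum_iff_tendsto_nat_of_nonneg (fun n => ?_) _).mpr ?_
  · have := ab_nonneg ⟨h0, h1⟩ n; linarith [this.1, this.2]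
  · have h2 : Tendsto (fun N => (6/ε + 3) * (ab ε N).1 + (3/ε + 3) * (ab ε N).2)
        atTop (nhds 0) := by
      have ha : Tendsto (fun n => (ab ε n).1) atTop (nhds 0) := by
        refine squeeze_zero (g := fun n : ℕ => (1 - ε/12)^n)
          (fun n => (ab_nonneg ⟨h0, h1⟩ n).1) (fun n => ?_) ?_
        · exact le_trans (by nlinarith [(ab_nonneg ⟨h0, h1⟩ n).2]) (ab_decay ⟨h0, h1⟩ n)
        · exact tendsto_pow_atTop_nhds_zero_of_lt_one (by linarith) (by linarith)
      have hb : Tendsto (fun n => (ab ε n).2) atTop (nhds 0) := by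
        have := (ab_tendsto ⟨h0, h1⟩).sub ha
        simpa using this
      have := (ha.const_mul (6/ε + 3)).add (hb.const_mul (3/ε + 3))
      simpa using this
    have h3 : ∀ N, ∑ n ∈ Finset.range N, ((ab ε n).1 + (ab ε n).2)
        = (6/ε + 3) - ((6/ε + 3) * (ab ε N).1 + (3/ε + 3) * (ab ε N).2) := by
      intro N; have := ab_telescope ⟨h0, h1⟩ N; linarith
    simp only [h3]
    simpa using (tendsto_const_nhds (x := (6/ε+3 : ℝ))).sub h2


/-- For every `ε ∈ (0,1)`, the expected first passage time of the non-adaptive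
Metropolis chain from state 1 to state 3 satisfies `E[T̄₁→₃] = 6/ε + 3`; equivalently,
`(ε/6)·E[T̄₁→₃] = 1 + ε/2`. -/
theorem stmt0 (ε : ℝ) (hε : ε ∈ Set.Ioo (0 : ℝ) 1)
    (μ : Measure (ℕ → WLState)) [IsProbabilityMeasure μ]
    (hμ : IsChainLaw (fun _ _ => Pbar ε) 0 μ) :
    (∫⁻ ω, (hitTime 2 ω : ENNReal) ∂μ) = ENNReal.ofReal (6 / ε + 3) ∧
      ε / 6 * (∫⁻ ω, (hitTime 2 ω : ENNReal) ∂μ).toReal = 1 + ε / 2 := by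
  obtain ⟨h0, h1⟩ := hε
  have hA : ∀ n, μ {ω : ℕ → WLState | ∀ k ≤ n, ω k ≠ 2}
      = ENNReal.ofReal ((ab ε n).1 + (ab ε n).2) := by
    intro n
    rw [measA hμ n, (g_eq_ab ⟨h0, h1⟩ n).1, (g_eq_ab ⟨h0, h1⟩ n).2,
      ENNReal.ofReal_add (ab_nonneg ⟨h0, h1⟩ n).1 (ab_nonneg ⟨h0, h1⟩ n).2]
  set N : Set (ℕ → WLState) := {ω | ∀ m, ω m ≠ 2} with hN
  have hNmeas : MeasurableSet N := by
    have : N = ⋂ m, (fun ω : ℕ → WLState => ω m) ⁻¹' ({2}ᶜ) := by ext ω; simp [hN]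
    rw [this]
    exact MeasurableSet.iInter fun m =>
      (measurable_pi_apply m) (measurableSet_singleton _).compl
  have hNnull : μ N = 0 := by
    have hle : ∀ n, μ N ≤ ENNReal.ofReal ((ab ε n).1 + (ab ε n).2) := by
      intro n
      rw [← hA n]
      exact measure_mono (fun ω hω k _ => hω k)
    have htd : Tendsto (fun n => ENNReal.ofReal ((ab ε n).1 + (ab ε n).2))
        atTop (nhds 0) := by
      have := ENNReal.tendsto_ofReal (ab_tendsto ⟨h0, h1⟩)
      simpa using this
    exact le_zero_iff.mp (ge_of_tendsto htd (Eventually.of_forall hle))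
  have hTset : ∀ n : ℕ, {ω : ℕ → WLState | n < hitTime 2 ω}
      = {ω : ℕ → WLState | ∀ k ≤ n, ω k ≠ 2} \ N := by
    intro n
    ext ω
    simp only [Set.mem_setOf_eq, Set.mem_diff, hN]
    constructor
    · intro h
      have hne : {m : ℕ | ω m = 2}.Nonempty := by
        by_contra hc
        rw [Set.not_nonempty_iff_eq_empty] at hc
        rw [hitTime, hc, Nat.sInf_empty] at h
        omega
      constructor
      · intro k hk hk2
        have : hitTime 2 ω ≤ k := Nat.sInf_le hk2
        omega
      · intro hcon
        obtain ⟨m, hm⟩ := hne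
        exact hcon m hm
    · rintro ⟨havoid, hhit⟩
      simp only [Set.mem_setOf_eq, not_forall, not_not] at hhit
      obtain ⟨m, hm⟩ := hhit
      have hmem : hitTime 2 ω ∈ {m : ℕ | ω m = 2} := Nat.sInf_mem ⟨m, hm⟩
      by_contra hc
      push_neg at hc
      exact havoid _ hc hmem
  have hAmeas : ∀ n, MeasurableSet {ω : ℕ → WLState | ∀ k ≤ n, ω k ≠ 2} := by
    intro n
    have : {ω : ℕ → WLState | ∀ k ≤ n, ω k ≠ 2}
        = ⋂ k ∈ {k : ℕ | k ≤ n}, (fun ω : ℕ → WLState => ω k) ⁻¹' ({2}ᶜ) := by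
      ext ω; simp
    rw [this]
    exact MeasurableSet.biInter (Set.to_countable _)
      (fun k _ => (measurable_pi_apply k) (measurableSet_singleton _).compl)
  have hTmeas : ∀ n : ℕ, MeasurableSet {ω : ℕ → WLState | n < hitTime 2 ω} := by
    intro n
    rw [hTset n]
    exact (hAmeas n).diff hNmeas
  have hT : ∀ n, μ {ω : ℕ → WLState | n < hitTime 2 ω}
      = ENNReal.ofReal ((ab ε n).1 + (ab ε n).2) := by
    intro n
    rw [hTset n, measure_diff_null hNnull, hA n]
  have hint : (∫⁻ ω, (hitTime 2 ω : ENNReal) ∂μ)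
      = ∑' n : ℕ, μ {ω : ℕ → WLState | n < hitTime 2 ω} := by
    have hpt : ∀ ω : ℕ → WLState, ((hitTime 2 ω : ℕ) : ENNReal)
        = ∑' n : ℕ, Set.indicator {ω' : ℕ → WLState | n < hitTime 2 ω'}
            (fun _ => (1:ENNReal)) ω := by
      intro ω
      have h1 := tsum_eq_sum
        (f := fun n : ℕ => Set.indicator {ω' : ℕ → WLState | n < hitTime 2 ω'}
          (fun _ => (1:ENNReal)) ω)
        (s := Finset.range (hitTime 2 ω)) (L := SummationFilter.unconditional ℕ)
        (fun n hn => by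
          apply Set.indicator_of_notMem
          intro h
          exact hn (Finset.mem_range.mpr h))
      rw [h1]
      have h2 : ∀ n ∈ Finset.range (hitTime 2 ω),
          (fun n : ℕ => Set.indicator {ω' : ℕ → WLState | n < hitTime 2 ω'}
            (fun _ => (1:ENNReal)) ω) n = 1 := by
        intro n hn
        apply Set.indicator_of_mem
        exact Finset.mem_range.mp hn
      rw [Finset.sum_congr rfl h2]
      simp
    calc ∫⁻ ω, ((hitTime 2 ω : ℕ) : ENNReal) ∂μ
        = ∫⁻ ω, ∑' n : ℕ, Set.indicator {ω' : ℕ → WLState | n < hitTime 2 ω'}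
            (fun _ => (1:ENNReal)) ω ∂μ := lintegral_congr hpt
      _ = ∑' n : ℕ, ∫⁻ ω, Set.indicator {ω' : ℕ → WLState | n < hitTime 2 ω'}
            (fun _ => (1:ENNReal)) ω ∂μ :=
          lintegral_tsum (fun n => (measurable_const.indicator (hTmeas n)).aemeasurable)
      _ = ∑' n : ℕ, μ {ω : ℕ → WLState | n < hitTime 2 ω} := by
          refine tsum_congr fun n => ?_
          exact lintegral_indicator_one (hTmeas n)
  have hq : ∀ n : ℕ, 0 ≤ (ab ε n).1 + (ab ε n).2 := by
    intro n; have := ab_nonneg ⟨h0, h1⟩ n; linarith [this.1, this.2]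
  have hmain : (∫⁻ ω, (hitTime 2 ω : ENNReal) ∂μ) = ENNReal.ofReal (6 / ε + 3) := by
    rw [hint, tsum_congr hT,
      ← ENNReal.ofReal_tsum_of_nonneg hq (ab_hasSum ⟨h0, h1⟩).summable,
      (ab_hasSum ⟨h0, h1⟩).tsum_eq]
  refine ⟨hmain, ?_⟩
  rw [hmain, ENNReal.toReal_ofReal (by positivity)]
  field_simp
  ring
end
end

section
/- For every c ≥ 0, the first passage time of the non-adaptive Metropolis chain satisfies lim_{ε→0} P((ε/6)·T̄₁→₃ > c) = e^{−c}; that is, (ε/6)·T̄₁→₃ converges in distribution, as ε → 0, to an exponential random variable with parameter 1. -/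
open MeasureTheory ProbabilityTheory Filter Real Set Topology

noncomputable section

section Aux

namespace S1

def rr (ε : ℝ) : ℝ := Real.sqrt (1/9 + ε^2/36)
def lp (ε : ℝ) : ℝ := 2/3 - ε/6 + rr ε
def lm (ε : ℝ) : ℝ := 2/3 - ε/6 - rr ε
def AA (ε : ℝ) : ℝ := (1/3 + ε/6 + rr ε) / (2 * rr ε)
def BB (ε : ℝ) : ℝ := (rr ε - 1/3 - ε/6) / (2 * rr ε)

def uv (ε : ℝ) : ℕ → ℝ × ℝ
  | 0 => (1, 0)
  | n+1 => ((1 - ε/3) * (uv ε n).1 + (uv ε n).2 / 3,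
            (ε/3) * (uv ε n).1 + (uv ε n).2 / 3)

def SS (ε : ℝ) (n : ℕ) : ℝ := (uv ε n).1 + (uv ε n).2

lemma rr_sq (ε : ℝ) : rr ε ^ 2 = 1/9 + ε^2/36 := by
  rw [rr, Real.sq_sqrt]; positivity

lemma rr_pos (ε : ℝ) : 0 < rr ε := by
  rw [rr]; positivity

lemma rr_ge (ε : ℝ) : 1/3 ≤ rr ε := by
  nlinarith [rr_sq ε, rr_pos ε, sq_nonneg ε]

lemma rr_le {ε : ℝ} (hε : 0 ≤ ε) : rr ε ≤ 1/3 + ε/6 := by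
  nlinarith [rr_sq ε, rr_pos ε]

lemma rr_lt {ε : ℝ} (hε : 0 < ε) : rr ε < 1/3 + ε/6 := by
  nlinarith [rr_sq ε, rr_pos ε]

lemma lp_lt_one {ε : ℝ} (hε : 0 < ε) : lp ε < 1 := by
  have := rr_lt hε; rw [lp]; linarith

lemma lp_pos {ε : ℝ} (hε : ε ≤ 1) : 0 < lp ε := by
  have := rr_ge ε; rw [lp]; linarith

lemma lp_le_one {ε : ℝ} (hε : 0 ≤ ε) : lp ε ≤ 1 := by
  have := rr_le hε; rw [lp]; linarith

lemma lm_nonneg {ε : ℝ} (hε0 : 0 ≤ ε) (hε1 : ε ≤ 1) : 0 ≤ lm ε := by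
  have := rr_le hε0; rw [lm]; linarith

lemma lm_le_lp (ε : ℝ) : lm ε ≤ lp ε := by
  have := rr_pos ε; rw [lm, lp]; linarith

lemma uv_closed (ε : ℝ) (n : ℕ) :
    2 * rr ε * (uv ε n).1
      = (1/3 - ε/6 + rr ε) * lp ε ^ n + (rr ε - 1/3 + ε/6) * lm ε ^ n ∧
    6 * rr ε * (uv ε n).2 = ε * (lp ε ^ n - lm ε ^ n) := by
  have hr2 := rr_sq ε
  have I1 : (1 - ε/3) * (1/3 - ε/6 + rr ε) + ε/9 = (1/3 - ε/6 + rr ε) * lp ε := by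
    rw [lp]; linear_combination (-1 : ℝ) * hr2
  have I2 : (1 - ε/3) * (rr ε - 1/3 + ε/6) - ε/9 = (rr ε - 1/3 + ε/6) * lm ε := by
    rw [lm]; linear_combination (1 : ℝ) * hr2
  have I3 : ε * ((1/3 - ε/6 + rr ε) + 1/3) = ε * lp ε := by rw [lp]; ring
  have I4 : ε * ((rr ε - 1/3 + ε/6) - 1/3) = -(ε * lm ε) := by rw [lm]; ring
  induction n with
  | zero => refine ⟨?_, ?_⟩ <;> simp [uv] <;> ring
  | succ n ih =>
    obtain ⟨ih1, ih2⟩ := ih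
    constructor
    · show 2 * rr ε * ((1 - ε/3) * (uv ε n).1 + (uv ε n).2 / 3) = _
      rw [pow_succ, pow_succ]
      linear_combination (1 - ε/3) * ih1 + (1/9 : ℝ) * ih2
        + (lp ε ^ n) * I1 + (lm ε ^ n) * I2
    · show 6 * rr ε * ((ε/3) * (uv ε n).1 + (uv ε n).2 / 3) = _
      rw [pow_succ, pow_succ]
      linear_combination ε * ih1 + (1/3 : ℝ) * ih2 + (lp ε ^ n) * I3 + (lm ε ^ n) * I4
end S1
namespace S1
lemma SS_closed (ε : ℝ) (n : ℕ) :
    SS ε n = AA ε * lp ε ^ n + BB ε * lm ε ^ n := by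
  have hr := rr_pos ε
  obtain ⟨h1, h2⟩ := uv_closed ε n
  have hne : (2 * rr ε) ≠ 0 := by positivity
  have key : SS ε n
      = ((1/3 + ε/6 + rr ε) * lp ε ^ n + (rr ε - 1/3 - ε/6) * lm ε ^ n) / (2 * rr ε) := by
    rw [SS, eq_div_iff hne]
    linear_combination h1 + (1/3 : ℝ) * h2
  rw [key, AA, BB]
  ring

lemma uv_nonneg {ε : ℝ} (hε0 : 0 ≤ ε) (hε1 : ε ≤ 1) (n : ℕ) :
    0 ≤ (uv ε n).1 ∧ 0 ≤ (uv ε n).2 := by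
  induction n with
  | zero => simp [uv]
  | succ n ih =>
    obtain ⟨h1, h2⟩ := ih
    constructor
    · show 0 ≤ (1 - ε/3) * (uv ε n).1 + (uv ε n).2 / 3; nlinarith
    · show 0 ≤ (ε/3) * (uv ε n).1 + (uv ε n).2 / 3; positivity

lemma SS_nonneg {ε : ℝ} (hε0 : 0 ≤ ε) (hε1 : ε ≤ 1) (n : ℕ) : 0 ≤ SS ε n := by
  obtain ⟨h1, h2⟩ := uv_nonneg hε0 hε1 n
  rw [SS]; linarith

lemma BB_abs_le {ε : ℝ} (hε0 : 0 < ε) (hε1 : ε ≤ 1) : |BB ε| ≤ ε / 4 := by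
  have hr := rr_pos ε
  have h1 := rr_ge ε
  have h2 := rr_le hε0.le
  rw [BB, abs_div, abs_of_pos (by linarith : (0:ℝ) < 2 * rr ε),
    div_le_iff₀ (by linarith : (0:ℝ) < 2 * rr ε)]
  apply abs_le.mpr
  constructor <;> nlinarith

lemma SS_sub_pow {ε : ℝ} (hε0 : 0 < ε) (hε1 : ε ≤ 1) (n : ℕ) :
    |SS ε n - lp ε ^ n| ≤ ε / 2 := by
  have hAB : AA ε + BB ε = 1 := by
    have hr := rr_pos ε
    rw [AA, BB]; field_simp; ring
  have hB := BB_abs_le hε0 hε1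
  have hlp0 : 0 ≤ lp ε := (lp_pos hε1).le
  have hlp1 : lp ε ≤ 1 := lp_le_one hε0.le
  have hlm0 : 0 ≤ lm ε := lm_nonneg hε0.le hε1
  have hlm1 : lm ε ≤ 1 := le_trans (lm_le_lp ε) hlp1
  have hp1 : lp ε ^ n ≤ 1 := pow_le_one₀ hlp0 hlp1
  have hp0 : 0 ≤ lp ε ^ n := pow_nonneg hlp0 n
  have hm1 : lm ε ^ n ≤ 1 := pow_le_one₀ hlm0 hlm1
  have hm0 : 0 ≤ lm ε ^ n := pow_nonneg hlm0 n
  have : SS ε n - lp ε ^ n = BB ε * (lm ε ^ n - lp ε ^ n) := by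
    rw [SS_closed]; linear_combination (lp ε ^ n) * hAB
  rw [this, abs_mul]
  have : |lm ε ^ n - lp ε ^ n| ≤ 2 := by rw [abs_le]; constructor <;> linarith
  calc |BB ε| * |lm ε ^ n - lp ε ^ n| ≤ (ε/4) * 2 := by
        apply mul_le_mul hB this (abs_nonneg _) (by positivity)
    _ = ε / 2 := by ring

lemma SS_tendsto_zero {ε : ℝ} (hε0 : 0 < ε) (hε1 : ε < 1) :
    Filter.Tendsto (fun n => SS ε n) atTop (𝓝 0) := by
  have hlp0 : 0 ≤ lp ε := (lp_pos hε1.le).le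
  have hlp1 : lp ε < 1 := lp_lt_one hε0
  have hlm0 : 0 ≤ lm ε := lm_nonneg hε0.le hε1.le
  have h1 : Filter.Tendsto (fun n => AA ε * lp ε ^ n) atTop (𝓝 0) := by
    rw [show (0:ℝ) = AA ε * 0 by ring]
    exact (tendsto_pow_atTop_nhds_zero_of_lt_one hlp0 hlp1).const_mul _
  have h2 : Filter.Tendsto (fun n => BB ε * lm ε ^ n) atTop (𝓝 0) := by
    rw [show (0:ℝ) = BB ε * 0 by ring]
    exact (tendsto_pow_atTop_nhds_zero_of_lt_one hlm0
      (lt_of_le_of_lt (lm_le_lp ε) hlp1)).const_mul _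
  have := h1.add h2
  simp only [add_zero] at this
  exact this.congr fun n => (SS_closed ε n).symm
end S1
namespace S1
open Filter

lemma rr_cont : Continuous rr := by
  apply Real.continuous_sqrt.comp
  continuity

lemma rr_zero : rr 0 = 1/3 := by
  rw [rr, show (1/9 + (0:ℝ)^2/36) = (1/3)^2 by norm_num, Real.sqrt_sq (by norm_num)]

lemma lp_tendsto : Tendsto lp (𝓝 0) (𝓝 1) := by
  have : Continuous lp := by
    unfold lp; exact (continuous_const.sub (continuous_id.div_const 6)).add rr_cont
  have h := this.tendsto 0
  rw [show lp 0 = 1 by rw [lp, rr_zero]; norm_num] at h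
  exact h

/-- `(lp ε - 1)/ε → -1/6` along `𝓝[Ioo 0 1] 0`. -/
lemma lp_slope_tendsto :
    Tendsto (fun ε => (lp ε - 1) / ε) (𝓝[Set.Ioo (0:ℝ) 1] 0) (𝓝 (-(1/6))) := by
  have heq : ∀ ε ∈ Set.Ioo (0:ℝ) 1,
      (lp ε - 1) / ε = -(1/6) + ε / (36 * (rr ε + 1/3)) := by
    intro ε hε
    have hε0 : 0 < ε := hε.1
    have hr := rr_pos ε
    have hr2 := rr_sq ε
    have h3 : rr ε + 1/3 ≠ 0 := by positivity
    rw [lp]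
    field_simp
    ring_nf
    nlinarith [hr2]
  have hlim : Tendsto (fun ε => -(1/6) + ε / (36 * (rr ε + 1/3)))
      (𝓝[Set.Ioo (0:ℝ) 1] 0) (𝓝 (-(1/6))) := by
    have hden : Tendsto (fun ε => 36 * (rr ε + 1/3)) (𝓝 (0:ℝ)) (𝓝 24) := by
      have : Continuous fun ε => 36 * (rr ε + 1/3) := by
        exact continuous_const.mul (rr_cont.add continuous_const)
      have h := this.tendsto 0
      rw [show 36 * (rr 0 + 1/3) = 24 by rw [rr_zero]; norm_num] at h
      exact h
    have h2 : Tendsto (fun ε : ℝ => ε / (36 * (rr ε + 1/3))) (𝓝 (0:ℝ)) (𝓝 0) := by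
      have := Tendsto.div tendsto_id hden (by norm_num)
      simpa [Pi.div_def] using this
    have h3 : Tendsto (fun ε : ℝ => -(1/6 : ℝ) + ε / (36 * (rr ε + 1/3))) (𝓝 0)
        (𝓝 (-(1/6) + 0)) := tendsto_const_nhds.add h2
    rw [add_zero] at h3
    exact h3.mono_left nhdsWithin_le_nhds
  exact hlim.congr' (by filter_upwards [self_mem_nhdsWithin] with ε hε using (heq ε hε).symm)

end S1
namespace S1

/-- `log (lp ε) / (lp ε - 1) → 1` along `𝓝[Ioo 0 1] 0`. -/
lemma log_slope_tendsto :
    Tendsto (fun ε => Real.log (lp ε) / (lp ε - 1)) (𝓝[Set.Ioo (0:ℝ) 1] 0) (𝓝 1) := by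
  have hderiv : HasDerivAt Real.log 1 1 := by
    simpa using Real.hasDerivAt_log one_ne_zero
  have hslope := hasDerivAt_iff_tendsto_slope.mp hderiv
  have hcomp : Tendsto lp (𝓝[Set.Ioo (0:ℝ) 1] 0) (𝓝[≠] 1) := by
    rw [tendsto_nhdsWithin_iff]
    constructor
    · exact lp_tendsto.mono_left nhdsWithin_le_nhds
    · filter_upwards [self_mem_nhdsWithin] with ε hε
      exact ne_of_lt (lp_lt_one hε.1)
  have := hslope.comp hcomp
  refine this.congr fun ε => ?_
  simp [slope, Real.log_one]
  rw [inv_mul_eq_div]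

end S1
namespace S1

/-- Main analytic limit. -/
lemma SS_floor_tendsto (c : ℝ) (hc : 0 ≤ c) :
    Tendsto (fun ε : ℝ => SS ε ⌊6 * c / ε⌋₊) (𝓝[Set.Ioo (0:ℝ) 1] 0)
      (𝓝 (Real.exp (-c))) := by
  set F : Filter ℝ := 𝓝[Set.Ioo (0:ℝ) 1] 0 with hF
  have hmem : ∀ᶠ ε in F, ε ∈ Set.Ioo (0:ℝ) 1 := self_mem_nhdsWithin
  -- step 1: (ε * n)/6 → c
  have h1 : Tendsto (fun ε : ℝ => ε * (⌊6 * c / ε⌋₊ : ℝ) / 6) F (𝓝 c) := by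
    apply tendsto_of_tendsto_of_tendsto_of_le_of_le'
      (g := fun ε : ℝ => c - ε / 6) (h := fun _ : ℝ => c)
    · have : Tendsto (fun ε : ℝ => c - ε / 6) (𝓝 (0:ℝ)) (𝓝 (c - 0/6)) := by
        exact tendsto_const_nhds.sub (tendsto_id.div_const 6)
      simpa using this.mono_left nhdsWithin_le_nhds
    · exact tendsto_const_nhds
    · filter_upwards [hmem] with ε hε
      have hε0 : 0 < ε := hε.1
      have := Nat.lt_floor_add_one (6 * c / ε)
      have h' : 6 * c / ε - 1 < (⌊6 * c / ε⌋₊ : ℝ) := by linarith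
      rw [div_lt_iff₀ hε0] at *
      nlinarith
    · filter_upwards [hmem] with ε hε
      have hε0 : 0 < ε := hε.1
      have := Nat.floor_le (by positivity : (0:ℝ) ≤ 6 * c / ε)
      rw [le_div_iff₀ hε0] at this
      linarith
  -- step 2: (n : ℝ) * log (lp ε) → -c
  have h2 : Tendsto (fun ε : ℝ => (⌊6 * c / ε⌋₊ : ℝ) * Real.log (lp ε)) F (𝓝 (-c)) := by
    have hfac : Tendsto (fun ε : ℝ => 6 * (Real.log (lp ε) / (lp ε - 1)) * ((lp ε - 1) / ε))
        F (𝓝 (-1)) := by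
      have hfac' := ((log_slope_tendsto.const_mul 6).mul lp_slope_tendsto)
      rw [show (6*(1:ℝ))*(-(1/6)) = -1 by norm_num] at hfac'
      exact hfac'
    have := h1.mul hfac
    have heq : ∀ᶠ ε in F,
        ε * (⌊6 * c / ε⌋₊ : ℝ) / 6 * (6 * (Real.log (lp ε) / (lp ε - 1)) * ((lp ε - 1) / ε))
          = (⌊6 * c / ε⌋₊ : ℝ) * Real.log (lp ε) := by
      filter_upwards [hmem] with ε hε
      have hε0 : ε ≠ 0 := ne_of_gt hε.1
      have hlp1 : lp ε - 1 ≠ 0 := ne_of_lt (by linarith [lp_lt_one hε.1])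
      field_simp
    have := this.congr' heq
    simpa using this
  -- step 3: lp ε ^ n → exp (-c)
  have h3 : Tendsto (fun ε : ℝ => lp ε ^ ⌊6 * c / ε⌋₊) F (𝓝 (Real.exp (-c))) := by
    have := (Real.continuous_exp.tendsto (-c)).comp h2
    refine this.congr' ?_
    filter_upwards [hmem] with ε hε
    have hlp : 0 < lp ε := lp_pos hε.2.le
    simp only [Function.comp]
    rw [Real.exp_nat_mul, Real.exp_log hlp]
  -- step 4: SS - lp^n → 0 and conclude
  have h4 : Tendsto (fun ε : ℝ => SS ε ⌊6 * c / ε⌋₊ - lp ε ^ ⌊6 * c / ε⌋₊) F (𝓝 0) := by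
    have hg : Tendsto (fun ε : ℝ => ε / 2) F (𝓝 0) := by
      have : Tendsto (fun ε : ℝ => ε / 2) (𝓝 (0:ℝ)) (𝓝 (0/2)) := tendsto_id.div_const 2
      simpa using this.mono_left nhdsWithin_le_nhds
    refine squeeze_zero_norm' ?_ hg
    filter_upwards [hmem] with ε hε
    exact SS_sub_pow hε.1 hε.2.le _
  have := h3.add h4
  rw [add_zero] at this
  exact this.congr fun ε => by ring

end S1

namespace S1

def extend (n : ℕ) (y : Fin (n+1) → WLState) : ℕ → WLState :=
  fun k => if h : k < n+1 then y ⟨k, h⟩ else 0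

def Cyl (n : ℕ) (y : Fin (n+1) → WLState) : Set (ℕ → WLState) :=
  {ω | ∀ k ≤ n, ω k = extend n y k}

def wR (ε : ℝ) (n : ℕ) (y : Fin (n+1) → WLState) : ℝ :=
  (if extend n y 0 = 0 then (1:ℝ) else 0) *
    ∏ k ∈ Finset.range n, Pbar ε (extend n y k) (extend n y (k+1))

def En (n : ℕ) (s : WLState) : Finset (Fin (n+1) → WLState) :=
  Finset.univ.filter (fun y => (∀ k, y k ≠ 2) ∧ y (Fin.last n) = s)

def fR (ε : ℝ) (n : ℕ) (s : WLState) : ℝ := ∑ y ∈ En n s, wR ε n y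

lemma Pbar_nonneg {ε : ℝ} (h0 : 0 ≤ ε) (h1 : ε ≤ 1) (s t : WLState) :
    0 ≤ Pbar ε s t := by
  fin_cases s <;> fin_cases t <;> simp [Pbar] <;> linarith

lemma wR_nonneg {ε : ℝ} (h0 : 0 ≤ ε) (h1 : ε ≤ 1) (n : ℕ) (y : Fin (n+1) → WLState) :
    0 ≤ wR ε n y := by
  apply mul_nonneg
  · split <;> norm_num
  · exact Finset.prod_nonneg fun k _ => Pbar_nonneg h0 h1 _ _

lemma measurable_cyl (n : ℕ) (y : Fin (n+1) → WLState) : MeasurableSet (Cyl n y) := by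
  have : Cyl n y = ⋂ (k : ℕ), ⋂ (_ : k ≤ n), (fun ω : ℕ → WLState => ω k) ⁻¹' {extend n y k} := by
    ext ω; simp [Cyl, Set.mem_iInter]
  rw [this]
  exact MeasurableSet.iInter fun k => MeasurableSet.iInter fun _ =>
    (measurable_pi_apply k) (measurableSet_singleton _)

lemma extend_fin (n : ℕ) (y : Fin (n+1) → WLState) (i : Fin (n+1)) :
    extend n y (i : ℕ) = y i := by
  rw [extend, dif_pos i.isLt]

lemma partition (μ : Measure (ℕ → WLState)) (n : ℕ) (S : Finset (Fin (n+1) → WLState)) :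
    μ {ω | (fun k : Fin (n+1) => ω (k : ℕ)) ∈ S} = ∑ y ∈ S, μ (Cyl n y) := by
  have hset : {ω : ℕ → WLState | (fun k : Fin (n+1) => ω (k : ℕ)) ∈ S} = ⋃ y ∈ S, Cyl n y := by
    ext ω
    simp only [Set.mem_setOf_eq, Set.mem_iUnion]
    constructor
    · intro h
      refine ⟨fun k : Fin (n+1) => ω (k : ℕ), h, fun k hk => ?_⟩
      rw [extend, dif_pos (Nat.lt_succ_of_le hk)]
    · rintro ⟨y, hy, hcyl⟩
      have : (fun k : Fin (n+1) => ω (k : ℕ)) = y := by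
        funext i
        rw [hcyl (i : ℕ) (Nat.lt_succ_iff.mp i.isLt), extend_fin]
      rwa [this]
  rw [hset, measure_biUnion_finset ?disj (fun y _ => measurable_cyl n y)]
  intro y _ z _ hne
  simp only [Function.onFun]
  rw [Set.disjoint_left]
  intro ω hy hz
  apply hne
  funext i
  have h1 := hy (i : ℕ) (Nat.lt_succ_iff.mp i.isLt)
  have h2 := hz (i : ℕ) (Nat.lt_succ_iff.mp i.isLt)
  rw [extend_fin] at h1 h2
  rw [← h1, ← h2]

lemma cyl_measure {ε : ℝ} (hε : ε ∈ Set.Ioo (0:ℝ) 1) {μ : Measure (ℕ → WLState)}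
    (hμ : IsChainLaw (fun _ _ => Pbar ε) 0 μ) (n : ℕ) (y : Fin (n+1) → WLState) :
    μ (Cyl n y) = ENNReal.ofReal (wR ε n y) := by
  have := hμ n (extend n y)
  rw [Cyl, this, wR]
  rw [ENNReal.ofReal_mul (by split <;> norm_num),
    ENNReal.ofReal_prod_of_nonneg (fun k _ => Pbar_nonneg hε.1.le hε.2.le _ _)]
  congr 1
  split <;> simp

lemma En_two (n : ℕ) : En n 2 = ∅ := by
  rw [En, Finset.filter_eq_empty_iff]
  rintro y - ⟨h1, h2⟩
  exact h1 _ h2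

lemma fR_two (ε : ℝ) (n : ℕ) : fR ε n 2 = 0 := by
  rw [fR, En_two, Finset.sum_empty]

lemma extend_snoc (n : ℕ) (z : Fin (n+1) → WLState) (x : WLState) (k : ℕ) (hk : k ≤ n) :
    extend (n+1) (Fin.snoc z x) k = extend n z k := by
  have hk1 : k < n + 1 := Nat.lt_succ_of_le hk
  have hk2 : k < n + 2 := by omega
  rw [extend, extend, dif_pos hk2, dif_pos hk1]
  have : (⟨k, hk2⟩ : Fin (n+2)) = Fin.castSucc ⟨k, hk1⟩ := rfl
  rw [this, Fin.snoc_castSucc]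

lemma extend_snoc_last (n : ℕ) (z : Fin (n+1) → WLState) (x : WLState) :
    extend (n+1) (Fin.snoc z x) (n+1) = x := by
  rw [extend, dif_pos (by omega : n+1 < n+2)]
  have : (⟨n+1, by omega⟩ : Fin (n+2)) = Fin.last (n+1) := rfl
  rw [this, Fin.snoc_last]

lemma extend_last (n : ℕ) (z : Fin (n+1) → WLState) :
    extend n z n = z (Fin.last n) := by
  rw [extend, dif_pos (by omega : n < n+1)]
  rfl

lemma wR_snoc (ε : ℝ) (n : ℕ) (z : Fin (n+1) → WLState) (x : WLState) :
    wR ε (n+1) (Fin.snoc z x) = wR ε n z * Pbar ε (z (Fin.last n)) x := by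
  have hprod : ∀ k ∈ Finset.range n,
      Pbar ε (extend (n+1) (Fin.snoc z x) k) (extend (n+1) (Fin.snoc z x) (k+1))
        = Pbar ε (extend n z k) (extend n z (k+1)) := by
    intro k hk
    have hk' : k < n := Finset.mem_range.mp hk
    rw [extend_snoc n z x k (by omega), extend_snoc n z x (k+1) (by omega)]
  rw [wR, wR, Finset.prod_range_succ, Finset.prod_congr rfl hprod,
    extend_snoc n z x 0 (Nat.zero_le n), extend_snoc n z x n le_rfl,
    extend_snoc_last, extend_last]
  ring

lemma snoc_forall (n : ℕ) (z : Fin (n+1) → WLState) (x : WLState) :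
    (∀ k : Fin (n+2), (Fin.snoc z x : Fin (n+2) → WLState) k ≠ 2) ↔ (∀ i : Fin (n+1), z i ≠ 2) ∧ x ≠ 2 := by
  constructor
  · intro h
    refine ⟨fun i => ?_, ?_⟩
    · have := h i.castSucc; rwa [Fin.snoc_castSucc] at this
    · have := h (Fin.last (n+1)); rwa [Fin.snoc_last] at this
  · rintro ⟨h1, h2⟩ k
    refine Fin.lastCases ?_ ?_ k
    · rwa [Fin.snoc_last]
    · intro i; rw [Fin.snoc_castSucc]; exact h1 i

lemma fR_step (ε : ℝ) (n : ℕ) (s : WLState) (hs : s ≠ 2) :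
    fR ε (n+1) s = fR ε n 0 * Pbar ε 0 s + fR ε n 1 * Pbar ε 1 s := by
  classical
  rw [fR, En, Finset.sum_filter]
  rw [← Equiv.sum_comp (Fin.snocEquiv (fun _ : Fin (n+2) => WLState))
    (fun y => if (∀ k, y k ≠ 2) ∧ y (Fin.last (n+1)) = s then wR ε (n+1) y else 0)]
  rw [Fintype.sum_prod_type]
  have he : ∀ (x : WLState) (z : Fin (n+1) → WLState),
      Fin.snocEquiv (fun _ : Fin (n+2) => WLState) (x, z) = Fin.snoc z x := fun x z => rfl
  simp only [he, Fin.snoc_last, snoc_forall]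
  have hterm : ∀ (x : WLState) (z : Fin (n+1) → WLState),
      (if ((∀ i, z i ≠ 2) ∧ x ≠ 2) ∧ x = s then wR ε (n+1) (Fin.snoc z x) else 0)
        = if x = s then (if (∀ i, z i ≠ 2) then wR ε n z * Pbar ε (z (Fin.last n)) s else 0)
          else 0 := by
    intro x z
    by_cases hx : x = s
    · subst hx
      by_cases hz : ∀ i, z i ≠ 2
      · simp [hz, hs, wR_snoc]
      · simp [hz]
    · simp [hx]
  simp only [hterm]
  rw [Finset.sum_comm]
  simp only [Finset.sum_ite_eq' Finset.univ s, Finset.mem_univ, if_true]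
  rw [← Finset.sum_filter]
  rw [← Finset.sum_fiberwise (Finset.univ.filter (fun z : Fin (n+1) → WLState => ∀ i, z i ≠ 2))
    (fun z => z (Fin.last n)) (fun z => wR ε n z * Pbar ε (z (Fin.last n)) s)]
  have hfib : ∀ t : WLState,
      ∑ z ∈ Finset.filter (fun z => z (Fin.last n) = t)
        (Finset.univ.filter (fun z : Fin (n+1) → WLState => ∀ i, z i ≠ 2)),
        wR ε n z * Pbar ε (z (Fin.last n)) s = fR ε n t * Pbar ε t s := by
    intro t
    rw [Finset.filter_filter]
    have hcg : ∀ z ∈ (Finset.univ.filter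
        fun z : Fin (n+1) → WLState => (∀ i, z i ≠ 2) ∧ z (Fin.last n) = t),
        wR ε n z * Pbar ε (z (Fin.last n)) s = wR ε n z * Pbar ε t s := by
      intro z hz
      rw [(Finset.mem_filter.mp hz).2.2]
    rw [Finset.sum_congr rfl hcg, ← Finset.sum_mul]
    rfl
  rw [Fin.sum_univ_three]
  rw [hfib 0, hfib 1, hfib 2, fR_two]
  ring

end S1

namespace S1
lemma fR_zero (ε : ℝ) : fR ε 0 0 = 1 ∧ fR ε 0 1 = 0 := by
  have h0 : En 0 0 = {fun _ => 0} := by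
    ext y
    simp only [En, Finset.mem_filter, Finset.mem_univ, true_and, Finset.mem_singleton]
    constructor
    · rintro ⟨-, h2⟩
      funext i
      have hi : i = Fin.last 0 := Fin.ext (by omega)
      rw [hi, h2]
    · rintro rfl
      exact ⟨fun k => by simp, rfl⟩
  have h1 : En 0 1 = {fun _ => 1} := by
    ext y
    simp only [En, Finset.mem_filter, Finset.mem_univ, true_and, Finset.mem_singleton]
    constructor
    · rintro ⟨-, h2⟩
      funext i
      have hi : i = Fin.last 0 := Fin.ext (by omega)
      rw [hi, h2]
    · rintro rfl
      exact ⟨fun k => by simp, rfl⟩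
  constructor
  · rw [fR, h0, Finset.sum_singleton, wR]
    simp [extend]
  · rw [fR, h1, Finset.sum_singleton, wR]
    simp [extend]

lemma Pbar_entries (ε : ℝ) :
    Pbar ε 0 0 = 1 - ε/3 ∧ Pbar ε 1 0 = 1/3 ∧ Pbar ε 0 1 = ε/3 ∧ Pbar ε 1 1 = 1/3 := by
  refine ⟨?_, ?_, ?_, ?_⟩ <;> simp [Pbar]

lemma fR_eq_uv (ε : ℝ) (n : ℕ) : fR ε n 0 = (uv ε n).1 ∧ fR ε n 1 = (uv ε n).2 := by
  obtain ⟨e1, e2, e3, e4⟩ := Pbar_entries ε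
  induction n with
  | zero => exact ⟨(fR_zero ε).1.trans rfl, (fR_zero ε).2.trans rfl⟩
  | succ n ih =>
    obtain ⟨ih1, ih2⟩ := ih
    constructor
    · rw [fR_step ε n 0 (by decide), ih1, ih2, e1, e2]
      show _ = (1 - ε/3) * (uv ε n).1 + (uv ε n).2 / 3
      ring
    · rw [fR_step ε n 1 (by decide), ih1, ih2, e3, e4]
      show _ = (ε/3) * (uv ε n).1 + (uv ε n).2 / 3
      ring

lemma measure_avoid {ε : ℝ} (hε : ε ∈ Set.Ioo (0:ℝ) 1) {μ : Measure (ℕ → WLState)}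
    (hμ : IsChainLaw (fun _ _ => Pbar ε) 0 μ) (n : ℕ) :
    μ {ω | ∀ k ≤ n, ω k ≠ 2} = ENNReal.ofReal (SS ε n) := by
  classical
  set E' : Finset (Fin (n+1) → WLState) :=
    Finset.univ.filter (fun y => ∀ i, y i ≠ 2) with hE'
  have hset : {ω : ℕ → WLState | ∀ k ≤ n, ω k ≠ 2}
      = {ω | (fun k : Fin (n+1) => ω (k : ℕ)) ∈ E'} := by
    ext ω
    simp only [Set.mem_setOf_eq, hE', Finset.mem_filter, Finset.mem_univ, true_and]
    constructor
    · intro h i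
      exact h (i : ℕ) (Nat.lt_succ_iff.mp i.isLt)
    · intro h k hk
      exact h ⟨k, Nat.lt_succ_of_le hk⟩
  rw [hset, partition μ n E']
  rw [Finset.sum_congr rfl (fun y _ => cyl_measure hε hμ n y),
    ← ENNReal.ofReal_sum_of_nonneg (fun y _ => wR_nonneg hε.1.le hε.2.le n y)]
  congr 1
  rw [← Finset.sum_fiberwise E' (fun z => z (Fin.last n)) (wR ε n)]
  have hfib : ∀ t : WLState,
      ∑ z ∈ Finset.filter (fun z => z (Fin.last n) = t) E', wR ε n z = fR ε n t := by
    intro t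
    rw [hE', Finset.filter_filter]
    rfl
  rw [Fin.sum_univ_three, hfib 0, hfib 1, hfib 2, fR_two,
    (fR_eq_uv ε n).1, (fR_eq_uv ε n).2, SS]
  ring

lemma measure_never {ε : ℝ} (hε : ε ∈ Set.Ioo (0:ℝ) 1) {μ : Measure (ℕ → WLState)}
    (hμ : IsChainLaw (fun _ _ => Pbar ε) 0 μ) :
    μ {ω | ∀ k, ω k ≠ 2} = 0 := by
  have hle : ∀ n : ℕ, μ {ω | ∀ k, ω k ≠ 2} ≤ ENNReal.ofReal (SS ε n) := by
    intro n
    rw [← measure_avoid hε hμ n]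
    exact measure_mono fun ω h k _ => h k
  have htend : Tendsto (fun n => ENNReal.ofReal (SS ε n)) atTop (𝓝 0) := by
    have := (ENNReal.continuous_ofReal.tendsto 0).comp (SS_tendsto_zero hε.1 hε.2)
    simpa [Function.comp_def] using this
  exact le_antisymm (ge_of_tendsto' htend hle) (zero_le)

lemma event_eq {ε : ℝ} (hε0 : 0 < ε) {c : ℝ} (hc : 0 ≤ c) :
    {ω : ℕ → WLState | c < ε / 6 * (hitTime 2 ω : ℝ)}
      = {ω : ℕ → WLState | ∀ k ≤ ⌊6 * c / ε⌋₊, ω k ≠ 2} \ {ω | ∀ k, ω k ≠ 2} := by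
  ext ω
  set T := hitTime 2 ω with hT
  set n := ⌊6 * c / ε⌋₊ with hn
  have hiff : c < ε / 6 * (T : ℝ) ↔ n < T := by
    have key : (6 * c / ε < (T:ℝ)) ↔ c < ε / 6 * T := by
      rw [div_lt_iff₀ hε0]
      constructor <;> intro <;> nlinarith
    rw [hn, Nat.floor_lt (by positivity), key]
  simp only [Set.mem_setOf_eq, Set.mem_diff, ← hT, ← hn, hiff]
  constructor
  · intro h
    have hT0 : T ≠ 0 := by omega
    have hne : {m : ℕ | ω m = 2}.Nonempty := by
      by_contra hemp
      rw [Set.not_nonempty_iff_eq_empty] at hemp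
      rw [hT, hitTime, hemp, Nat.sInf_empty] at hT0
      exact hT0 rfl
    refine ⟨fun k hk hk2 => ?_, fun hall => hall _ (Nat.sInf_mem hne)⟩
    · have : T ≤ k := Nat.sInf_le hk2
      omega
  · rintro ⟨h1, h2⟩
    push_neg at h2
    obtain ⟨k, hk⟩ := h2
    have hne : {m : ℕ | ω m = 2}.Nonempty := ⟨k, hk⟩
    have hmem : ω T = 2 := Nat.sInf_mem hne
    by_contra hTn
    exact h1 T (by omega) hmem

end S1

end Aux

/-- For every `c ≥ 0`,
`lim_{ε→0} P((ε/6)·T̄₁→₃ > c) = e^{−c}`. -/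
theorem stmt1 (μ : ℝ → Measure (ℕ → WLState))
    (hprob : ∀ ε ∈ Set.Ioo (0 : ℝ) 1, IsProbabilityMeasure (μ ε))
    (hμ : ∀ ε ∈ Set.Ioo (0 : ℝ) 1, IsChainLaw (fun _ _ => Pbar ε) 0 (μ ε))
    (c : ℝ) (hc : 0 ≤ c) :
    Tendsto (fun ε : ℝ => (μ ε {ω : ℕ → WLState | c < ε / 6 * (hitTime 2 ω : ℝ)}).toReal)
      (𝓝[Set.Ioo (0 : ℝ) 1] 0) (𝓝 (Real.exp (-c))) := by
  have hev : ∀ ε ∈ Set.Ioo (0:ℝ) 1,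
      (μ ε {ω : ℕ → WLState | c < ε / 6 * (hitTime 2 ω : ℝ)}).toReal
        = S1.SS ε ⌊6 * c / ε⌋₊ := by
    intro ε hε
    rw [S1.event_eq hε.1 hc,
      measure_diff_null (S1.measure_never hε (hμ ε hε)),
      S1.measure_avoid hε (hμ ε hε)]
    exact ENNReal.toReal_ofReal (S1.SS_nonneg hε.1.le hε.2.le _)
  refine (S1.SS_floor_tendsto c hc).congr' ?_
  filter_upwards [self_mem_nhdsWithin] with ε hε
  exact (hev ε hε).symm
end
end

section
/- For α ∈ (0,1), ln(Ξₙ) is asymptotically equivalent to (γ⋆/(1−α))·n^{1−α} as n → ∞, i.e. lim_{n→∞} ln(Ξₙ) / ((γ⋆/(1−α))·n^{1−α}) = 1. -/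
open Filter Real Topology

set_option maxHeartbeats 1000000

noncomputable section

/-- `Ξₙ = ∏_{k=1}^n (1 + γₖ)` with `γₖ = γ⋆ k^(-α)` and the convention `Ξ₀ = 1`. -/
def Xi (γs α : ℝ) (n : ℕ) : ℝ := ∏ k ∈ Finset.Icc 1 n, (1 + γs * (k : ℝ) ^ (-α))

/-- For `α ∈ (0,1)`, `ln(Ξₙ) ~ (γ⋆/(1−α))·n^{1−α}` as `n → ∞`. -/
theorem stmt12 (γs α : ℝ) (hγs : 0 < γs) (hα : 0 < α) (hα1 : α < 1) :
    Tendsto (fun n : ℕ => Real.log (Xi γs α n) / (γs / (1 - α) * (n : ℝ) ^ (1 - α)))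
      atTop (𝓝 1) := by
  have h1α : (0 : ℝ) < 1 - α := by linarith
  set L : ℝ := γs / (1 - α) with hL
  have hLpos : 0 < L := div_pos hγs h1α
  -- basic sequences
  set b : ℕ → ℝ := fun k => ((k : ℝ) + 1) ^ (1 - α) - (k : ℝ) ^ (1 - α) with hb
  set u : ℕ → ℝ := fun k => γs * ((k : ℝ) + 1) ^ (-α) with hu
  set a : ℕ → ℝ := fun k => Real.log (1 + u k) with ha
  have hxpos : ∀ k : ℕ, (0 : ℝ) < (k : ℝ) + 1 := fun k => by positivity
  have hupos : ∀ k : ℕ, 0 < u k := fun k =>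
    mul_pos hγs (Real.rpow_pos_of_pos (hxpos k) _)
  have hbpos : ∀ k : ℕ, 0 < b k := fun k => by
    have : (k : ℝ) ^ (1 - α) < ((k : ℝ) + 1) ^ (1 - α) :=
      Real.rpow_lt_rpow (Nat.cast_nonneg k) (by linarith [hxpos k]) h1α
    simpa [hb] using sub_pos.mpr this
  -- telescoping sum of b
  have hsumb : ∀ n : ℕ, ∑ i ∈ Finset.range n, b i = (n : ℝ) ^ (1 - α) := by
    intro n
    have := Finset.sum_range_sub (fun i : ℕ => (i : ℝ) ^ (1 - α)) n
    simp only [Nat.cast_zero] at this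
    rw [Real.zero_rpow (by linarith : (1 : ℝ) - α ≠ 0), sub_zero] at this
    rw [← this]
    apply Finset.sum_congr rfl
    intro i _
    push_cast
    rfl
  -- u tends to 0 within ≠ 0
  have hu0 : Tendsto u atTop (𝓝[≠] (0 : ℝ)) := by
    apply tendsto_nhdsWithin_of_tendsto_nhds_of_eventually_within
    · have : Tendsto (fun k : ℕ => ((k : ℝ) + 1) ^ (-α)) atTop (𝓝 0) := by
        apply (tendsto_rpow_neg_atTop hα).comp
        exact tendsto_atTop_add_const_right atTop 1 tendsto_natCast_atTop_atTop
      simpa [hu] using this.const_mul γs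
    · exact Eventually.of_forall fun k => (hupos k).ne'
  -- log(1+u)/u → 1
  have hlog : Tendsto (fun k => a k / u k) atTop (𝓝 1) := by
    have hder : HasDerivAt (fun t : ℝ => Real.log (1 + t)) 1 0 := by
      have h₁ : HasDerivAt (fun t : ℝ => 1 + t) 1 0 := by
        simpa using (hasDerivAt_id (0 : ℝ)).const_add 1
      have h₂ := (Real.hasDerivAt_log (by norm_num : (1 : ℝ) + 0 ≠ 0)).comp 0 h₁
      simpa [Function.comp_def] using h₂
    apply ((hasDerivAt_iff_tendsto_slope.mp hder).comp hu0).congr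
    intro k
    simp [Function.comp, slope_def_field, ha]
  -- slope of (1-t)^(1-α) at 0 : ratio (1-(1-v)^(1-α))/v → 1-α, with v k = 1/(k+1)
  set v : ℕ → ℝ := fun k => ((k : ℝ) + 1)⁻¹ with hv
  have hv0 : Tendsto v atTop (𝓝[≠] (0 : ℝ)) := by
    apply tendsto_nhdsWithin_of_tendsto_nhds_of_eventually_within
    · exact tendsto_one_div_add_atTop_nhds_zero_nat.congr fun k => one_div _
    · exact Eventually.of_forall fun k => (inv_pos.mpr (hxpos k)).ne'
  have hslope2 : Tendsto (fun k => ((1 - v k) ^ (1 - α) - 1) / v k) atTop (𝓝 (-(1 - α))) := by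
    have hder : HasDerivAt (fun t : ℝ => (1 - t) ^ (1 - α)) (-(1 - α)) 0 := by
      have h₁ : HasDerivAt (fun t : ℝ => 1 - t) (-1) 0 := by
        simpa using (hasDerivAt_id (0 : ℝ)).const_sub 1
      have h₂ : HasDerivAt (fun y : ℝ => y ^ (1 - α)) ((1 - α) * (1 : ℝ) ^ (1 - α - 1))
          ((1 : ℝ) - 0) := by
        rw [sub_zero]
        exact Real.hasDerivAt_rpow_const (Or.inl one_ne_zero)
      have h₃ := HasDerivAt.comp (0 : ℝ) h₂ h₁
      have heq : (1 - α) * (1 : ℝ) ^ (1 - α - 1) * (-1) = -(1 - α) := by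
        rw [Real.one_rpow]; ring
      simpa [Function.comp_def, heq] using h₃
    apply ((hasDerivAt_iff_tendsto_slope.mp hder).comp hv0).congr
    intro k
    simp [Function.comp, slope_def_field, Real.one_rpow]
  -- b k / (k+1)^(-α) = (1-(1-v)^(1-α))/v
  have hbratio : ∀ k : ℕ, b k / ((k : ℝ) + 1) ^ (-α) = -(((1 - v k) ^ (1 - α) - 1) / v k) := by
    intro k
    have hx := hxpos k
    have hxne : ((k : ℝ) + 1) ≠ 0 := hx.ne'
    have hne : ((k : ℝ) + 1) ^ (-α) ≠ 0 := (Real.rpow_pos_of_pos hx _).ne'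
    have h1v : (1 : ℝ) - v k = (k : ℝ) / ((k : ℝ) + 1) := by
      show (1 : ℝ) - ((k : ℝ) + 1)⁻¹ = _
      field_simp
      ring
    have hk : (k : ℝ) ^ (1 - α) = ((k : ℝ) + 1) ^ (1 - α) * (1 - v k) ^ (1 - α) := by
      rw [h1v, ← Real.mul_rpow hx.le (by positivity)]
      congr 1
      field_simp
    have hsplit : ((k : ℝ) + 1) ^ (1 - α) = ((k : ℝ) + 1) ^ (-α) * ((k : ℝ) + 1) := by
      rw [show (1 : ℝ) - α = -α + 1 by ring, Real.rpow_add hx, Real.rpow_one]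
    show (((k : ℝ) + 1) ^ (1 - α) - (k : ℝ) ^ (1 - α)) / ((k : ℝ) + 1) ^ (-α) =
        -(((1 - v k) ^ (1 - α) - 1) / v k)
    rw [hk, hsplit]
    show _ = -(((1 - v k) ^ (1 - α) - 1) / ((k : ℝ) + 1)⁻¹)
    field_simp
    ring
  have hbratio' : Tendsto (fun k => b k / ((k : ℝ) + 1) ^ (-α)) atTop (𝓝 (1 - α)) := by
    simp only [hbratio]
    simpa using hslope2.neg
  -- a k / b k → L
  have hab : Tendsto (fun k => a k / b k) atTop (𝓝 L) := by
    have hrw : ∀ k, a k / b k = (a k / u k) * γs * (b k / ((k : ℝ) + 1) ^ (-α))⁻¹ := by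
      intro k
      have hbne := (hbpos k).ne'
      have hune := (hupos k).ne'
      have hpne : ((k : ℝ) + 1) ^ (-α) ≠ 0 := (Real.rpow_pos_of_pos (hxpos k) _).ne'
      have huk : u k = γs * ((k : ℝ) + 1) ^ (-α) := rfl
      field_simp [huk]
      ring
    simp only [hrw]
    have := (hlog.mul_const γs).mul (hbratio'.inv₀ (by positivity))
    simpa [hL, div_eq_mul_inv] using this
  -- f := a - L*b is little-o of b
  have hf : (fun k => a k - L * b k) =o[atTop] b := by
    rw [Asymptotics.isLittleO_iff_tendsto' (Eventually.of_forall fun k hk =>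
      absurd hk (hbpos k).ne')]
    have : Tendsto (fun k => a k / b k - L) atTop (𝓝 (L - L)) := hab.sub_const L
    rw [sub_self] at this
    apply this.congr
    intro k
    rw [sub_div, mul_div_assoc, div_self (hbpos k).ne', mul_one]
  -- sum it
  have hbtop : Tendsto (fun n => ∑ i ∈ Finset.range n, b i) atTop atTop := by
    simp only [hsumb]
    exact (tendsto_rpow_atTop h1α).comp tendsto_natCast_atTop_atTop
  have hsum := hf.sum_range (fun i => (hbpos i).le) hbtop
  simp only [Finset.sum_sub_distrib, ← Finset.mul_sum, hsumb] at hsum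
  -- ratio tends to 0
  have hcond : ∀ᶠ n : ℕ in atTop, (n : ℝ) ^ (1 - α) = 0 →
      (∑ i ∈ Finset.range n, a i) - L * (n : ℝ) ^ (1 - α) = 0 := by
    filter_upwards [eventually_gt_atTop 0] with n hn h
    exact absurd h (Real.rpow_pos_of_pos (by exact_mod_cast hn) _).ne'
  have h0 := (Asymptotics.isLittleO_iff_tendsto' hcond).mp hsum
  have h1 := h0.div_const L
  rw [zero_div] at h1
  have hratio : Tendsto (fun n : ℕ =>
      ((∑ i ∈ Finset.range n, a i) - L * (n : ℝ) ^ (1 - α)) / (L * (n : ℝ) ^ (1 - α)))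
      atTop (𝓝 0) := by
    refine h1.congr fun n => ?_
    rw [div_div, mul_comm ((n : ℝ) ^ (1 - α)) L]
  -- log Xi = sum of a
  have hlogXi : ∀ n : ℕ, Real.log (Xi γs α n) = ∑ i ∈ Finset.range n, a i := by
    intro n
    rw [Xi, Real.log_prod]
    · rw [← Finset.Ico_add_one_right_eq_Icc, Finset.sum_Ico_eq_sum_range]
      simp only [Nat.add_sub_cancel]
      apply Finset.sum_congr rfl
      intro i _
      rw [ha, hu]
      push_cast
      rw [add_comm 1 (i : ℝ)]
    · intro k hk
      have hk1 : 1 ≤ k := (Finset.mem_Icc.mp hk).1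
      have : (0 : ℝ) < (k : ℝ) := by exact_mod_cast hk1
      have : 0 < γs * (k : ℝ) ^ (-α) := mul_pos hγs (Real.rpow_pos_of_pos this _)
      positivity
  -- conclude
  have final : Tendsto (fun n : ℕ =>
      1 + ((∑ i ∈ Finset.range n, a i) - L * (n : ℝ) ^ (1 - α)) / (L * (n : ℝ) ^ (1 - α)))
      atTop (𝓝 1) := by
    have := (tendsto_const_nhds (x := (1 : ℝ)) (f := atTop (α := ℕ))).add hratio
    rwa [add_zero] at this
  apply final.congr' ?_
  filter_upwards [eventually_gt_atTop 0] with n hn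
  have hne : L * (n : ℝ) ^ (1 - α) ≠ 0 :=
    (mul_pos hLpos (Real.rpow_pos_of_pos (by exact_mod_cast hn) _)).ne'
  rw [hlogXi]
  field_simp
  ring
end
end

section
/- For α = 1/2, there exists a constant C > 0 such that for every integer n ≥ 1, Ξₙ ≥ C·exp( 2γ⋆·√n − (γ⋆²/2)·ln n ). -/
open Filter Real Topology

noncomputable section

lemma aux_log_quad (x : ℝ) (hx : 0 ≤ x) : x - x ^ 2 / 2 ≤ Real.log (1 + x) := by
  set f : ℝ → ℝ := fun t => Real.log (1 + t) - (t - t ^ 2 / 2) with hf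
  have key : ∀ y ∈ Set.Ici (0 : ℝ), HasDerivAt f ((1 + y)⁻¹ - (1 - y)) y := by
    intro y hy
    have hy0 : (0 : ℝ) ≤ y := hy
    have h1 : (1 : ℝ) + y ≠ 0 := by positivity
    have hlog : HasDerivAt (fun t : ℝ => Real.log (1 + t)) (1 / (1 + y)) y := by
      have := ((hasDerivAt_id y).const_add 1).log h1
      simpa using this
    have hpoly : HasDerivAt (fun t : ℝ => t - t ^ 2 / 2) (1 - 2 * y ^ 1 / 2) y := by
      exact (hasDerivAt_id y).sub ((hasDerivAt_pow 2 y).div_const 2)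
    have := hlog.sub hpoly
    exact this.congr_deriv (by ring)
  have hmono : MonotoneOn f (Set.Ici 0) := by
    apply monotoneOn_of_deriv_nonneg (convex_Ici 0)
    · intro y hy
      exact (key y hy).continuousAt.continuousWithinAt
    · intro y hy
      exact (key y (interior_subset hy)).differentiableAt.differentiableWithinAt
    · intro y hy
      rw [interior_Ici] at hy
      have hy0 : (0 : ℝ) < y := hy
      rw [(key y (le_of_lt hy0)).deriv]
      have h1 : (0 : ℝ) < 1 + y := by positivity
      rw [inv_eq_one_div, sub_nonneg, ← sub_nonneg, ← sub_nonneg]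
      have h : 1 / (1 + y) - (1 - y) = y ^ 2 / (1 + y) := by field_simp; ring
      rw [sub_zero, h]
      positivity
  have h0 : f 0 ≤ f x := hmono (Set.self_mem_Ici) hx hx
  simp [hf] at h0
  linarith

lemma aux_sqrt_sum (n : ℕ) :
    2 * Real.sqrt (n + 1) - 2 ≤ ∑ k ∈ Finset.Icc 1 n, (Real.sqrt k)⁻¹ := by
  induction n with
  | zero => simp
  | succ n ih =>
    rw [Finset.sum_Icc_succ_top (by omega)]
    have hb : (0 : ℝ) < Real.sqrt (n + 1) := by positivity
    have ha : (0 : ℝ) ≤ Real.sqrt (n + 1 + 1) := Real.sqrt_nonneg _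
    have hb2 : Real.sqrt ((n : ℝ) + 1) ^ 2 = (n : ℝ) + 1 := Real.sq_sqrt (by positivity)
    have ha2 : Real.sqrt ((n : ℝ) + 1 + 1) ^ 2 = (n : ℝ) + 1 + 1 := Real.sq_sqrt (by positivity)
    have key : 2 * Real.sqrt ((n : ℝ) + 1 + 1) - 2 * Real.sqrt ((n : ℝ) + 1)
        ≤ (Real.sqrt ((n : ℝ) + 1))⁻¹ := by
      rw [inv_eq_one_div, le_div_iff₀ hb]
      nlinarith [sq_nonneg (Real.sqrt ((n : ℝ) + 1 + 1) - Real.sqrt ((n : ℝ) + 1))]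
    push_cast
    push_cast at ih key
    linarith

lemma aux_harm_sum (n : ℕ) (hn : 1 ≤ n) :
    ∑ k ∈ Finset.Icc 1 n, ((k : ℝ))⁻¹ ≤ Real.log n + 1 := by
  induction n with
  | zero => omega
  | succ n ih =>
    rcases Nat.lt_or_ge n 1 with h | h
    · interval_cases n
      norm_num
    · rw [Finset.sum_Icc_succ_top (by omega)]
      have ih' := ih h
      have hn0 : (0 : ℝ) < n := by positivity
      have hkey : Real.log n + ((n : ℝ) + 1)⁻¹ ≤ Real.log (n + 1) := by
        have hx : (0 : ℝ) < ((n : ℝ) + 1) / n := by positivity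
        have := Real.one_sub_inv_le_log_of_pos hx
        rw [Real.log_div (by positivity) (by positivity)] at this
        have heq : 1 - (((n : ℝ) + 1) / n)⁻¹ = ((n : ℝ) + 1)⁻¹ := by
          field_simp
          ring
        rw [heq] at this
        linarith
      push_cast
      push_cast at ih' hkey
      linarith

/-- For `α = 1/2`, there is `C > 0` such that for every `n ≥ 1`,
`Ξₙ ≥ C·exp(2γ⋆·√n − (γ⋆²/2)·ln n)`. -/
theorem stmt15 (γs : ℝ) (hγs : 0 < γs) :
    ∃ C : ℝ, 0 < C ∧ ∀ n : ℕ, 1 ≤ n →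
      C * Real.exp (2 * γs * Real.sqrt n - γs ^ 2 / 2 * Real.log n) ≤ Xi γs (1 / 2) n := by
  refine ⟨Real.exp (-(2 * γs + γs ^ 2 / 2)), Real.exp_pos _, fun n hn => ?_⟩
  have hXi : Xi γs (1 / 2) n = ∏ k ∈ Finset.Icc 1 n, (1 + γs * (Real.sqrt k)⁻¹) := by
    unfold Xi
    refine Finset.prod_congr rfl fun k hk => ?_
    have hk1 : 1 ≤ k := (Finset.mem_Icc.mp hk).1
    rw [Real.rpow_neg (by positivity), ← Real.sqrt_eq_rpow]
  have hprod : Real.exp (∑ k ∈ Finset.Icc 1 n,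
      (γs * (Real.sqrt k)⁻¹ - γs ^ 2 / 2 * ((k : ℝ))⁻¹))
      ≤ ∏ k ∈ Finset.Icc 1 n, (1 + γs * (Real.sqrt k)⁻¹) := by
    rw [Real.exp_sum]
    apply Finset.prod_le_prod (fun k _ => (Real.exp_pos _).le)
    intro k hk
    have hk1 : 1 ≤ k := (Finset.mem_Icc.mp hk).1
    have hk0 : (0 : ℝ) < (k : ℝ) := by exact_mod_cast hk1
    set x := γs * (Real.sqrt k)⁻¹ with hx
    have hx0 : 0 ≤ x := by positivity
    have hsq : ((Real.sqrt k)⁻¹) ^ 2 = ((k : ℝ))⁻¹ := by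
      rw [inv_pow, Real.sq_sqrt hk0.le]
    have hterm : γs * (Real.sqrt k)⁻¹ - γs ^ 2 / 2 * ((k : ℝ))⁻¹ = x - x ^ 2 / 2 := by
      rw [hx, mul_pow, hsq]; ring
    rw [hterm]
    calc Real.exp (x - x ^ 2 / 2) ≤ Real.exp (Real.log (1 + x)) :=
          Real.exp_le_exp.mpr (aux_log_quad x hx0)
      _ = 1 + x := Real.exp_log (by linarith)
  have hsum : 2 * γs * Real.sqrt n - γs ^ 2 / 2 * Real.log n - (2 * γs + γs ^ 2 / 2)
      ≤ ∑ k ∈ Finset.Icc 1 n, (γs * (Real.sqrt k)⁻¹ - γs ^ 2 / 2 * ((k : ℝ))⁻¹) := by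
    rw [Finset.sum_sub_distrib, ← Finset.mul_sum, ← Finset.mul_sum]
    have h1 : 2 * Real.sqrt (n + 1) - 2 ≤ ∑ k ∈ Finset.Icc 1 n, (Real.sqrt k)⁻¹ :=
      aux_sqrt_sum n
    have h1' : Real.sqrt n ≤ Real.sqrt (n + 1) := Real.sqrt_le_sqrt (by linarith)
    have h2 : ∑ k ∈ Finset.Icc 1 n, ((k : ℝ))⁻¹ ≤ Real.log n + 1 := aux_harm_sum n hn
    have e1 : γs * (2 * Real.sqrt n - 2) ≤ γs * ∑ k ∈ Finset.Icc 1 n, (Real.sqrt k)⁻¹ := by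
      apply mul_le_mul_of_nonneg_left _ hγs.le
      linarith
    have e2 : γs ^ 2 / 2 * ∑ k ∈ Finset.Icc 1 n, ((k : ℝ))⁻¹
        ≤ γs ^ 2 / 2 * (Real.log n + 1) :=
      mul_le_mul_of_nonneg_left h2 (by positivity)
    linarith
  rw [hXi, ← Real.exp_add]
  calc Real.exp (-(2 * γs + γs ^ 2 / 2) + (2 * γs * Real.sqrt n - γs ^ 2 / 2 * Real.log n))
      ≤ Real.exp (∑ k ∈ Finset.Icc 1 n,
        (γs * (Real.sqrt k)⁻¹ - γs ^ 2 / 2 * ((k : ℝ))⁻¹)) := by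
        apply Real.exp_le_exp.mpr; linarith
    _ ≤ _ := hprod
end
end

section
/- For α ∈ (0,1) and every integer n ≥ 0, Σ_{k=0}^{n} Ξₖ ≤ (1/γ⋆)·(n+1)^{α}·exp( (γ⋆/(1−α))·(n+1)^{1−α} ). -/
open Filter Real Topology

noncomputable section

lemma Xi_pos (γs α : ℝ) (hγs : 0 < γs) (n : ℕ) : 0 < Xi γs α n := by
  apply Finset.prod_pos
  intro k hk
  have hk1 : 1 ≤ k := (Finset.mem_Icc.mp hk).1
  have : (0:ℝ) < (k:ℝ) ^ (-α) := Real.rpow_pos_of_pos (by exact_mod_cast hk1) _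
  nlinarith

lemma Xi_succ (γs α : ℝ) (n : ℕ) :
    Xi γs α (n + 1) = Xi γs α n * (1 + γs * ((n:ℝ) + 1) ^ (-α)) := by
  unfold Xi
  rw [Finset.prod_Icc_succ_top (Nat.le_add_left 1 n)]
  push_cast
  ring_nf

/-- Key integral comparison: `∑_{k=1}^m k^{-α} ≤ m^{1-α}/(1-α)`. -/
lemma sum_rpow_le (α : ℝ) (hα : 0 < α) (hα1 : α < 1) (m : ℕ) :
    ∑ k ∈ Finset.Icc 1 m, (k : ℝ) ^ (-α) ≤ (m : ℝ) ^ (1 - α) / (1 - α) := by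
  have h1α : (0:ℝ) < 1 - α := by linarith
  induction m with
  | zero => simp [Real.zero_rpow (by linarith : (1:ℝ)-α ≠ 0)]
  | succ m ih =>
    rw [Finset.sum_Icc_succ_top (Nat.le_add_left 1 m)]
    have hx : (0:ℝ) < (m:ℝ) + 1 := by positivity
    -- Bernoulli: (1 - 1/(m+1))^(1-α) ≤ 1 - (1-α)/(m+1)
    have hb : (1 + (-(1/((m:ℝ)+1)))) ^ (1 - α) ≤ 1 + (1-α) * (-(1/((m:ℝ)+1))) :=
      rpow_one_add_le_one_add_mul_self (by
        have : 1/((m:ℝ)+1) ≤ 1 := by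
          rw [div_le_one hx]; linarith
        linarith) h1α.le (by linarith)
    have hm : (m:ℝ) = ((m:ℝ)+1) * (1 + (-(1/((m:ℝ)+1)))) := by
      field_simp
      ring
    have key : (m:ℝ) ^ (1-α) ≤ ((m:ℝ)+1) ^ (1-α) - (1-α) * ((m:ℝ)+1) ^ (-α) := by
      calc (m:ℝ) ^ (1-α) = (((m:ℝ)+1) * (1 + (-(1/((m:ℝ)+1))))) ^ (1-α) := by rw [← hm]
        _ = ((m:ℝ)+1) ^ (1-α) * (1 + (-(1/((m:ℝ)+1)))) ^ (1-α) := by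
            rw [Real.mul_rpow hx.le (by
              have : 1/((m:ℝ)+1) ≤ 1 := by rw [div_le_one hx]; linarith
              linarith)]
        _ ≤ ((m:ℝ)+1) ^ (1-α) * (1 + (1-α) * (-(1/((m:ℝ)+1)))) := by
            apply mul_le_mul_of_nonneg_left hb (Real.rpow_nonneg hx.le _)
        _ = ((m:ℝ)+1) ^ (1-α) - (1-α) * (((m:ℝ)+1) ^ (1-α) / ((m:ℝ)+1)) := by ring
        _ = ((m:ℝ)+1) ^ (1-α) - (1-α) * ((m:ℝ)+1) ^ (-α) := by
            rw [← Real.rpow_sub_one hx.ne']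
            ring_nf
    have : ((m:ℝ)+1) ^ (-α) ≤ (((m:ℝ)+1) ^ (1-α) - (m:ℝ) ^ (1-α)) / (1-α) := by
      rw [le_div_iff₀ h1α]
      nlinarith
    push_cast
    calc ∑ k ∈ Finset.Icc 1 m, (k:ℝ) ^ (-α) + ((m:ℝ)+1) ^ (-α)
        ≤ (m:ℝ) ^ (1-α) / (1-α) + (((m:ℝ)+1) ^ (1-α) - (m:ℝ) ^ (1-α)) / (1-α) := by
          exact add_le_add ih this
      _ = ((m:ℝ)+1) ^ (1-α) / (1-α) := by ring

lemma Xi_le_exp (γs α : ℝ) (hγs : 0 < γs) (hα : 0 < α) (hα1 : α < 1) (m : ℕ) :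
    Xi γs α m ≤ Real.exp (γs / (1 - α) * (m : ℝ) ^ (1 - α)) := by
  have h1α : (0:ℝ) < 1 - α := by linarith
  calc Xi γs α m ≤ ∏ k ∈ Finset.Icc 1 m, Real.exp (γs * (k:ℝ) ^ (-α)) := by
        apply Finset.prod_le_prod
        · intro k hk
          have hk1 : 1 ≤ k := (Finset.mem_Icc.mp hk).1
          have : (0:ℝ) < (k:ℝ) ^ (-α) := Real.rpow_pos_of_pos (by exact_mod_cast hk1) _
          nlinarith
        · intro k _
          linarith [Real.add_one_le_exp (γs * (k:ℝ) ^ (-α))]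
    _ = Real.exp (∑ k ∈ Finset.Icc 1 m, γs * (k:ℝ) ^ (-α)) := (Real.exp_sum _ _).symm
    _ ≤ Real.exp (γs / (1 - α) * (m : ℝ) ^ (1 - α)) := by
        apply Real.exp_le_exp.mpr
        rw [← Finset.mul_sum]
        have := sum_rpow_le α hα hα1 m
        calc γs * ∑ k ∈ Finset.Icc 1 m, (k:ℝ) ^ (-α)
            ≤ γs * ((m:ℝ) ^ (1-α) / (1-α)) := by
              exact mul_le_mul_of_nonneg_left this hγs.le
          _ = γs / (1-α) * (m:ℝ) ^ (1-α) := by ring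

/-- For `α ∈ (0,1)` and every `n ≥ 0`,
`Σ_{k=0}^{n} Ξₖ ≤ (1/γ⋆)·(n+1)^{α}·exp((γ⋆/(1−α))·(n+1)^{1−α})`. -/
theorem stmt16 (γs α : ℝ) (hγs : 0 < γs) (hα : 0 < α) (hα1 : α < 1) (n : ℕ) :
    ∑ k ∈ Finset.range (n + 1), Xi γs α k ≤
      1 / γs * ((n : ℝ) + 1) ^ α * Real.exp (γs / (1 - α) * ((n : ℝ) + 1) ^ (1 - α)) := by
  have hn1 : (0:ℝ) < (n:ℝ) + 1 := by positivity
  -- telescoping: ∑_{k<n+1} γs (k+1)^{-α} Xi k = Xi (n+1) - 1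
  have htel : ∑ k ∈ Finset.range (n + 1), γs * ((k:ℝ) + 1) ^ (-α) * Xi γs α k
      = Xi γs α (n + 1) - 1 := by
    have : ∀ k : ℕ, γs * ((k:ℝ) + 1) ^ (-α) * Xi γs α k = Xi γs α (k+1) - Xi γs α k := by
      intro k
      rw [Xi_succ]
      ring
    simp_rw [this]
    rw [Finset.sum_range_sub (fun k => Xi γs α k)]
    simp [Xi]
  -- lower bound each coefficient by γs (n+1)^{-α}
  have hlb : γs * ((n:ℝ) + 1) ^ (-α) * ∑ k ∈ Finset.range (n + 1), Xi γs α k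
      ≤ Xi γs α (n + 1) - 1 := by
    rw [← htel, Finset.mul_sum]
    apply Finset.sum_le_sum
    intro k hk
    have hk' : (k:ℝ) + 1 ≤ (n:ℝ) + 1 := by
      have hkn : k ≤ n := Nat.lt_succ_iff.mp (Finset.mem_range.mp hk)
      have : (k:ℝ) ≤ (n:ℝ) := Nat.cast_le.mpr hkn
      linarith
    have hk0 : (0:ℝ) < (k:ℝ) + 1 := by positivity
    have hmono : ((n:ℝ) + 1) ^ (-α) ≤ ((k:ℝ) + 1) ^ (-α) := by
      apply Real.rpow_le_rpow_of_nonpos hk0 hk' (by linarith)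
    have := Xi_pos γs α hγs k
    have : γs * ((n:ℝ) + 1) ^ (-α) ≤ γs * ((k:ℝ) + 1) ^ (-α) :=
      mul_le_mul_of_nonneg_left hmono hγs.le
    nlinarith [Xi_pos γs α hγs k]
  have hXi1 := Xi_le_exp γs α hγs hα hα1 (n+1)
  have hpow : (0:ℝ) < ((n:ℝ)+1) ^ (-α) := Real.rpow_pos_of_pos hn1 _
  have hinv : ((n:ℝ)+1) ^ (-α) * ((n:ℝ)+1) ^ α = 1 := by
    rw [← Real.rpow_add hn1]; simp
  have hXi1' : Xi γs α (n+1) ≤ Real.exp (γs / (1 - α) * ((n:ℝ) + 1) ^ (1 - α)) := by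
    have : ((n:ℕ)+1 : ℝ) = (n:ℝ) + 1 := by push_cast; ring
    rw [← this]; exact_mod_cast hXi1
  -- conclude
  have key : γs * ((n:ℝ) + 1) ^ (-α) * ∑ k ∈ Finset.range (n + 1), Xi γs α k
      ≤ Real.exp (γs / (1 - α) * ((n:ℝ) + 1) ^ (1 - α)) := by
    have : (0:ℝ) < Real.exp (γs / (1 - α) * ((n:ℝ) + 1) ^ (1 - α)) := Real.exp_pos _
    linarith
  have hpos : (0:ℝ) < γs * ((n:ℝ) + 1) ^ (-α) := by positivity
  rw [← mul_le_mul_iff_right₀ hpos]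
  calc γs * ((n:ℝ) + 1) ^ (-α) * ∑ k ∈ Finset.range (n + 1), Xi γs α k
      ≤ Real.exp (γs / (1 - α) * ((n:ℝ) + 1) ^ (1 - α)) := key
    _ = γs * ((n:ℝ) + 1) ^ (-α) * (1 / γs * ((n : ℝ) + 1) ^ α *
        Real.exp (γs / (1 - α) * ((n : ℝ) + 1) ^ (1 - α))) := by
        have h1 : γs * ((n:ℝ) + 1) ^ (-α) * (1 / γs * ((n : ℝ) + 1) ^ α *
            Real.exp (γs / (1 - α) * ((n : ℝ) + 1) ^ (1 - α)))
          = (γs * (1 / γs)) * (((n:ℝ)+1) ^ (-α) * ((n:ℝ)+1) ^ α) *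
            Real.exp (γs / (1 - α) * ((n : ℝ) + 1) ^ (1 - α)) := by ring
        rw [h1, hinv, mul_one_div_cancel hγs.ne', one_mul, one_mul]
end
end
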